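/- Let (S,d) be a δ-hyperbolic geodesic (length) metric space. Let x, y ∈ S, set r = d(x,y), and let p be the midpoint of a geodesic from x to y (i.e., p = γ_{x,y}(r/2)). Then for every R ≥ 0, the intersection of the closed balls B(x,R) ∩ B(y,R) is contained in the ball B(p, R - r/2 + 2δ). -/
import Mathlib


/-- A geodesic arc from `x` to `y`: an isometric parametrization of `[0, d(x,y)]`. -/
def IsGeodesicArc {S : Type*} [MetricSpace S] (x y : S) (γ : ℝ → S) : Prop :=
  γ 0 = x ∧ γ (dist x y) = y ∧
    ∀ s ∈ Set.Icc (0 : ℝ) (dist x y), ∀ t ∈ Set.Icc (0 : ℝ) (dist x y),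
      dist (γ s) (γ t) = |s - t|

/-- A length (geodesic) space: any two points are joined by a geodesic arc. -/
def IsLengthSpace (S : Type*) [MetricSpace S] : Prop :=
  ∀ x y : S, ∃ γ : ℝ → S, IsGeodesicArc x y γ

/-- `δ`-hyperbolicity: every point of a side of a geodesic triangle is within
distance `δ` of the union of the other two sides. -/
def IsDeltaHyperbolic (S : Type*) [MetricSpace S] (δ : ℝ) : Prop :=
  ∀ (x y z : S) (γxy γyz γxz : ℝ → S),
    IsGeodesicArc x y γxy → IsGeodesicArc y z γyz → IsGeodesicArc x z γxz →
    ∀ p ∈ γxy '' Set.Icc (0 : ℝ) (dist x y),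
      ∃ q ∈ γyz '' Set.Icc (0 : ℝ) (dist y z) ∪ γxz '' Set.Icc (0 : ℝ) (dist x z),
        dist p q ≤ δ

theorem lunule_inclusion {S : Type*} [MetricSpace S] (δ : ℝ) (hδ : 0 ≤ δ)
    (hlen : IsLengthSpace S) (hhyp : IsDeltaHyperbolic S δ)
    (x y : S) (γ : ℝ → S) (hγ : IsGeodesicArc x y γ)
    (p : S) (hp : p = γ (dist x y / 2)) (R : ℝ) (hR : 0 ≤ R) :
    Metric.closedBall x R ∩ Metric.closedBall y R ⊆
      Metric.closedBall p (R - dist x y / 2 + 2 * δ) := by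
  intro z hz
  obtain ⟨hxz, hyz⟩ := hz
  rw [Metric.mem_closedBall] at hxz hyz ⊢
  rw [dist_comm] at hxz hyz
  set r := dist x y with hr
  have hr0 : 0 ≤ r := dist_nonneg
  obtain ⟨γyz, hγyz⟩ := hlen y z
  obtain ⟨γxz, hγxz⟩ := hlen x z
  have hmem : p ∈ γ '' Set.Icc (0 : ℝ) r := ⟨r / 2, ⟨by linarith, by linarith⟩, hp.symm⟩
  obtain ⟨q, hq, hpq⟩ := hhyp x y z γ γyz γxz hγ hγyz hγxz p hmem
  obtain ⟨h0, h1, hiso⟩ := hγ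
  -- distances from p to x and y
  have hdxp : dist x p = r / 2 := by
    rw [hp, ← h0, hiso 0 ⟨le_refl 0, hr0⟩ (r / 2) ⟨by linarith, by linarith⟩]
    rw [abs_of_nonpos (by linarith)]; ring
  have hdyp : dist y p = r / 2 := by
    rw [hp, ← h1, hiso r ⟨hr0, le_refl r⟩ (r / 2) ⟨by linarith, by linarith⟩]
    rw [abs_of_nonneg (by linarith)]; ring
  rcases hq with ⟨t, ht, hqt⟩ | ⟨t, ht, hqt⟩
  · obtain ⟨g0, g1, giso⟩ := hγyz
    obtain ⟨ht0, ht1⟩ := ht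
    have hyq : dist y q = t := by
      rw [← hqt, ← g0, giso 0 ⟨le_refl 0, le_trans ht0 ht1⟩ t ⟨ht0, ht1⟩,
        abs_of_nonpos (by linarith)]; ring
    have hqz : dist q z = dist y z - t := by
      have h := giso t ⟨ht0, ht1⟩ (dist y z) ⟨le_trans ht0 ht1, le_refl _⟩
      rw [hqt, g1, abs_of_nonpos (by linarith)] at h
      rw [h]; ring
    have htlb : r / 2 - δ ≤ t := by
      have := dist_triangle y q p
      rw [hdyp, hyq, dist_comm q p] at this; linarith
    calc dist z p ≤ dist z q + dist q p := dist_triangle z q p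
      _ = (dist y z - t) + dist p q := by rw [dist_comm z q, hqz, dist_comm q p]
      _ ≤ R - r / 2 + 2 * δ := by linarith
  · obtain ⟨g0, g1, giso⟩ := hγxz
    obtain ⟨ht0, ht1⟩ := ht
    have hxq : dist x q = t := by
      rw [← hqt, ← g0, giso 0 ⟨le_refl 0, le_trans ht0 ht1⟩ t ⟨ht0, ht1⟩,
        abs_of_nonpos (by linarith)]; ring
    have hqz : dist q z = dist x z - t := by
      have h := giso t ⟨ht0, ht1⟩ (dist x z) ⟨le_trans ht0 ht1, le_refl _⟩
      rw [hqt, g1, abs_of_nonpos (by linarith)] at h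
      rw [h]; ring
    have htlb : r / 2 - δ ≤ t := by
      have := dist_triangle x q p
      rw [hdxp, hxq, dist_comm q p] at this; linarith
    calc dist z p ≤ dist z q + dist q p := dist_triangle z q p
      _ = (dist x z - t) + dist p q := by rw [dist_comm z q, hqz, dist_comm q p]
      _ ≤ R - r / 2 + 2 * δ := by linarith
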